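/- For nonnegative integers k, m, the odd-odd moments of the Bernoulli lemniscate domain satisfy M_{2k+1,2m+1}(Ω) = (1/(2(k+m+2))) · C(k+m+2, k+1), where C denotes the binomial coefficient. -/

import Mathlib

set_option autoImplicit false

open MeasureTheory Real

/-- The Bernoulli lemniscate domain Ω = {z : |z² - 1| < 1}. -/
noncomputable def bernoulliLemniscate : Set ℂ := {z : ℂ | ‖z ^ 2 - 1‖ < 1}

/-- The complex moment `M_{p,q}(Ω) = (1/π) ∫_Ω z^p conj(z)^q dA`. -/
noncomputable def complexMoment (p q : ℕ) : ℂ :=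
  (1 / (π : ℂ)) * ∫ z in bernoulliLemniscate, z ^ p * (starRingEnd ℂ z) ^ q

lemma measurableSet_bl : MeasurableSet bernoulliLemniscate :=
  (isOpen_lt (by continuity) continuous_const).measurableSet

lemma symm_eq (r θ : ℝ) :
    Complex.polarCoord.symm (r, θ) = (r : ℂ) * Complex.exp (θ * Complex.I) := by
  rw [Complex.polarCoord_symm_apply, Complex.exp_mul_I]
  push_cast
  ring

lemma mem_bl_iff {r θ : ℝ} (hr : 0 < r) :
    (r : ℂ) * Complex.exp (θ * Complex.I) ∈ bernoulliLemniscate ↔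
      r ^ 2 < 2 * Real.cos (2 * θ) := by
  have hz2 : ((r : ℂ) * Complex.exp (θ * Complex.I)) ^ 2 - 1
      = ((r ^ 2 * Real.cos (2 * θ) - 1 : ℝ) : ℂ) + ((r ^ 2 * Real.sin (2 * θ) : ℝ) : ℂ) * Complex.I := by
    rw [mul_pow, ← Complex.exp_nat_mul]
    have h2 : ((2 : ℕ) : ℂ) * ((θ : ℂ) * Complex.I) = ((2 * θ : ℝ) : ℂ) * Complex.I := by
      push_cast; ring
    rw [h2, Complex.exp_mul_I]
    push_cast
    ring
  have habs : ‖((r : ℂ) * Complex.exp (θ * Complex.I)) ^ 2 - 1‖ ^ 2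
      = (r ^ 2 * Real.cos (2 * θ) - 1) ^ 2 + (r ^ 2 * Real.sin (2 * θ)) ^ 2 := by
    rw [Complex.sq_norm, hz2, Complex.normSq_add_mul_I]
  have key : (r ^ 2 * Real.cos (2 * θ) - 1) ^ 2 + (r ^ 2 * Real.sin (2 * θ)) ^ 2
      = (r ^ 2) ^ 2 - 2 * r ^ 2 * Real.cos (2 * θ) + 1 := by
    linear_combination (r ^ 2) ^ 2 * (Real.sin_sq_add_cos_sq (2 * θ))
  rw [key] at habs
  have hr2 : 0 < r ^ 2 := by positivity
  constructor
  · intro h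
    have h1 : ‖((r : ℂ) * Complex.exp (θ * Complex.I)) ^ 2 - 1‖ ^ 2 < 1 := by
      simp only [bernoulliLemniscate, Set.mem_setOf_eq] at h
      nlinarith [norm_nonneg (((r : ℂ) * Complex.exp (θ * Complex.I)) ^ 2 - 1)]
    rw [habs] at h1
    nlinarith
  · intro h
    simp only [bernoulliLemniscate, Set.mem_setOf_eq]
    have h1 : ‖((r : ℂ) * Complex.exp (θ * Complex.I)) ^ 2 - 1‖ ^ 2 < 1 := by
      rw [habs]; nlinarith
    nlinarith [norm_nonneg (((r : ℂ) * Complex.exp (θ * Complex.I)) ^ 2 - 1)]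

lemma integrand_eq (p q : ℕ) (r θ : ℝ) :
    ((r : ℂ) * Complex.exp (θ * Complex.I)) ^ p
      * (starRingEnd ℂ ((r : ℂ) * Complex.exp (θ * Complex.I))) ^ q
    = (r : ℂ) ^ (p + q) * Complex.exp ((((p : ℝ) - q) * θ : ℝ) * Complex.I) := by
  have hconj : starRingEnd ℂ ((r : ℂ) * Complex.exp (θ * Complex.I))
      = (r : ℂ) * Complex.exp (-(θ * Complex.I)) := by
    rw [map_mul, Complex.conj_ofReal, ← Complex.exp_conj]
    congr 1
    simp [Complex.conj_ofReal]
  rw [hconj, mul_pow, mul_pow, ← Complex.exp_nat_mul, ← Complex.exp_nat_mul,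
    mul_mul_mul_comm, ← Complex.exp_add, pow_add]
  congr 1
  push_cast
  ring
/-- The indicator function in polar coordinates. -/
noncomputable def Hfun (p q : ℕ) : ℝ × ℝ → ℂ :=
  (polarCoord.target).indicator fun x =>
    x.1 • Set.indicator bernoulliLemniscate
      (fun z => z ^ p * (starRingEnd ℂ z) ^ q) (Complex.polarCoord.symm x)

lemma step1 (p q : ℕ) :
    (∫ z in bernoulliLemniscate, z ^ p * (starRingEnd ℂ z) ^ q) = ∫ x : ℝ × ℝ, Hfun p q x := by
  rw [← integral_indicator measurableSet_bl,
    ← Complex.integral_comp_polarCoord_symm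
      (Set.indicator bernoulliLemniscate fun z => z ^ p * (starRingEnd ℂ z) ^ q),
    ← integral_indicator polarCoord.open_target.measurableSet]
  rfl

lemma meas_Hfun (p q : ℕ) : Measurable (Hfun p q) := by
  apply Measurable.indicator _ polarCoord.open_target.measurableSet
  apply Measurable.smul measurable_fst
  apply Measurable.comp (Measurable.indicator (((continuous_pow p).mul (Complex.continuous_conj.pow q)).measurable) measurableSet_bl)
  have : Continuous fun x : ℝ × ℝ => Complex.polarCoord.symm x := by
    simp only [Complex.polarCoord_symm_apply]
    fun_prop
  exact this.measurable

lemma norm_Hfun_le (p q : ℕ) (x : ℝ × ℝ) :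
    ‖Hfun p q x‖ ≤ Set.indicator (Set.Ioc (0:ℝ) 2 ×ˢ Set.Ioc (-π) π)
      (fun _ => (2:ℝ) ^ (p + q + 1)) x := by
  obtain ⟨r, θ⟩ := x
  have htarget : polarCoord.target = Set.Ioi (0:ℝ) ×ˢ Set.Ioo (-π) π := rfl
  have hind : (0:ℝ) ≤ Set.indicator (Set.Ioc (0:ℝ) 2 ×ˢ Set.Ioc (-π) π)
      (fun _ => (2:ℝ) ^ (p + q + 1)) (r, θ) :=
    Set.indicator_nonneg (fun _ _ => by positivity) _
  unfold Hfun
  by_cases hx : (r, θ) ∈ polarCoord.target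
  · rw [Set.indicator_of_mem hx]
    by_cases hz : Complex.polarCoord.symm (r, θ) ∈ bernoulliLemniscate
    · rw [Set.indicator_of_mem hz]
      rw [htarget] at hx
      have hr : 0 < r := hx.1
      have hθ : θ ∈ Set.Ioo (-π) π := hx.2
      have hcond : r ^ 2 < 2 * Real.cos (2 * θ) := by
        rw [symm_eq] at hz; exact (mem_bl_iff hr).1 hz
      have hr2 : r ≤ 2 := by nlinarith [Real.cos_le_one (2 * θ)]
      have hmem : (r, θ) ∈ Set.Ioc (0:ℝ) 2 ×ˢ Set.Ioc (-π) π :=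
        ⟨⟨hr, hr2⟩, ⟨hθ.1, le_of_lt hθ.2⟩⟩
      rw [Set.indicator_of_mem hmem, symm_eq, integrand_eq]
      rw [norm_smul, norm_mul,
        Complex.norm_exp_ofReal_mul_I, norm_pow, Complex.norm_real,
        Real.norm_eq_abs, _root_.abs_of_pos hr, mul_one]
      calc r * r ^ (p + q) ≤ 2 * 2 ^ (p + q) := by
            apply mul_le_mul hr2 (pow_le_pow_left₀ hr.le hr2 _) (by positivity) (by norm_num)
        _ = 2 ^ (p + q + 1) := by ring
    · rw [Set.indicator_of_notMem hz]
      simpa using hind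
  · rw [Set.indicator_of_notMem hx]
    simpa using hind

lemma integrable_Hfun (p q : ℕ) : Integrable (Hfun p q) := by
  apply Integrable.mono' (g := Set.indicator (Set.Ioc (0:ℝ) 2 ×ˢ Set.Ioc (-π) π)
      (fun _ => (2:ℝ) ^ (p + q + 1)))
  · rw [integrable_indicator_iff ((measurableSet_Ioc).prod measurableSet_Ioc)]
    refine integrableOn_const ?_
    rw [Measure.volume_eq_prod, Measure.prod_prod]
    exact ENNReal.mul_ne_top (by simp) (by simp)
  · exact (meas_Hfun p q).aestronglyMeasurable
  · exact Filter.Eventually.of_forall (norm_Hfun_le p q)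

lemma step2 (p q : ℕ) :
    (∫ x : ℝ × ℝ, Hfun p q x) = ∫ θ : ℝ, ∫ r : ℝ, Hfun p q (r, θ) := by
  rw [Measure.volume_eq_prod] at *
  exact integral_prod_symm _ (by rw [← Measure.volume_eq_prod]; exact integrable_Hfun p q)

noncomputable def gfun (k m : ℕ) (θ : ℝ) : ℂ :=
  ((max (2 * Real.cos (2 * θ)) 0 : ℝ) : ℂ) ^ (k + m + 2)
    * Complex.exp (((2 * ((k : ℝ) - m) * θ : ℝ) : ℂ) * Complex.I)

lemma step3 (k m : ℕ) (θ : ℝ) :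
    (∫ r : ℝ, Hfun (2 * k + 1) (2 * m + 1) (r, θ))
      = Set.indicator (Set.Ioo (-π) π)
          (fun t => ((2 * ((k : ℝ) + m + 2) : ℝ) : ℂ)⁻¹ * gfun k m t) θ := by
  set c : ℝ := 2 * Real.cos (2 * θ) with hc
  set R : ℝ := Real.sqrt (max c 0) with hR
  have hR0 : 0 ≤ R := Real.sqrt_nonneg _
  by_cases hθ : θ ∈ Set.Ioo (-π) π
  · rw [Set.indicator_of_mem hθ]
    set N : ℕ := 2 * k + 1 + (2 * m + 1) with hN
    set K : ℂ := Complex.exp (((2 * ((k : ℝ) - m) * θ : ℝ) : ℂ) * Complex.I) with hK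
    have key : (fun r : ℝ => Hfun (2 * k + 1) (2 * m + 1) (r, θ))
        = Set.indicator (Set.Ioo 0 R) (fun r => (r : ℂ) ^ (N + 1) * K) := by
      funext r
      have hexp : ∀ r : ℝ, (((2 * k + 1 : ℕ) : ℝ) - ((2 * m + 1 : ℕ) : ℝ)) * θ
          = 2 * ((k : ℝ) - m) * θ := by intro r; push_cast; ring
      by_cases hmem : r ∈ Set.Ioo 0 R
      · have hr : 0 < r := hmem.1
        have hmax : 0 < max c 0 := Real.sqrt_pos.1 (lt_trans hr hmem.2)
        have hcpos : 0 < c := by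
          rcases lt_max_iff.1 hmax with h | h
          · exact h
          · exact absurd h (lt_irrefl 0)
        have hmaxeq : max c 0 = c := max_eq_left hcpos.le
        have hcond : r ^ 2 < c := by
          have := hmem.2
          rw [hR, hmaxeq] at this
          exact (Real.lt_sqrt hr.le).1 this
        have htar : (r, θ) ∈ polarCoord.target := by
          exact ⟨hr, hθ⟩
        unfold Hfun
        rw [Set.indicator_of_mem htar, symm_eq,
          Set.indicator_of_mem ((mem_bl_iff hr).2 hcond),
          Set.indicator_of_mem hmem, integrand_eq]
        rw [Complex.real_smul]
        rw [hexp r]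
        rw [← hK]
        ring
      · rw [Set.indicator_of_notMem hmem]
        unfold Hfun
        by_cases htar : (r, θ) ∈ polarCoord.target
        · rw [Set.indicator_of_mem htar]
          have hr : 0 < r := htar.1
          have hnot : Complex.polarCoord.symm (r, θ) ∉ bernoulliLemniscate := by
            intro hin
            rw [symm_eq] at hin
            have hcond : r ^ 2 < c := (mem_bl_iff hr).1 hin
            apply hmem
            refine ⟨hr, ?_⟩
            rw [hR]
            have hcpos : 0 < c := lt_of_le_of_lt (sq_nonneg r) hcond
            rw [max_eq_left hcpos.le]
            exact (Real.lt_sqrt hr.le).2 hcond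
          rw [Set.indicator_of_notMem hnot, smul_zero]
        · rw [Set.indicator_of_notMem htar]
      
    rw [key]
    have : ∀ r : ℝ, (r : ℂ) ^ (N + 1) = ((r ^ (N + 1) : ℝ) : ℂ) := fun r => by push_cast; ring
    rw [integral_indicator measurableSet_Ioo, integral_mul_const]
    simp_rw [this]
    have hreal : (∫ a in Set.Ioo (0:ℝ) R, a ^ (N + 1)) = R ^ (N + 2) / (N + 2) := by
      rw [← integral_Ioc_eq_integral_Ioo, ← intervalIntegral.integral_of_le hR0, integral_pow]
      norm_num
      ring_nf
    have hcast : (∫ a in Set.Ioo (0:ℝ) R, ((a ^ (N + 1) : ℝ) : ℂ))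
        = ((R ^ (N + 2) / (N + 2) : ℝ) : ℂ) := by rw [← hreal]; exact integral_ofReal
    rw [hcast]
    have hRpow : R ^ (N + 2) = (max c 0) ^ (k + m + 2) := by
      have h2 : N + 2 = 2 * (k + m + 2) := by omega
      rw [h2, pow_mul, Real.sq_sqrt (le_max_right _ _)]
    rw [hRpow]
    unfold gfun
    rw [← hc, ← hK]
    have hN2 : ((N : ℝ) + 2) = 2 * ((k : ℝ) + m + 2) := by push_cast [hN]; ring
    push_cast [hN2]
    ring
  · rw [Set.indicator_of_notMem hθ]
    have : ∀ r : ℝ, Hfun (2 * k + 1) (2 * m + 1) (r, θ) = 0 := by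
      intro r
      unfold Hfun
      apply Set.indicator_of_notMem
      intro htar
      exact hθ htar.2
    simp_rw [this]
    exact integral_zero _ _

noncomputable def hfun (k m : ℕ) (φ : ℝ) : ℂ :=
  ((2 * Real.cos φ : ℝ) : ℂ) ^ (k + m + 2)
    * Complex.exp ((((((k : ℝ) - m) * φ) : ℝ) : ℂ) * Complex.I)

lemma step9 (k m : ℕ) :
    (∫ φ in (-(π/2))..(π/2), hfun k m φ)
      = (π : ℂ) * (Nat.choose (k + m + 2) (m + 1) : ℂ) := by
  set n : ℕ := k + m + 2 with hn
  have hcos : ∀ φ : ℝ, ((2 * Real.cos φ : ℝ) : ℂ)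
      = Complex.exp (φ * Complex.I) + Complex.exp (-φ * Complex.I) := by
    intro φ
    rw [Complex.ofReal_mul, Complex.ofReal_ofNat, Complex.ofReal_cos, Complex.two_cos]
  have hterm : ∀ φ : ℝ, hfun k m φ =
      ∑ r ∈ Finset.range (n + 1),
        (Nat.choose n r : ℂ) *
          Complex.exp ((((2 * (r : ℝ) - 2 * m - 2 : ℝ)) : ℂ) * Complex.I * φ) := by
    intro φ
    unfold hfun
    rw [hcos, add_pow, Finset.sum_mul]
    rw [← hn]
    apply Finset.sum_congr rfl
    intro r hr
    have hrn : r ≤ n := Nat.lt_succ_iff.1 (Finset.mem_range.1 hr)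
    rw [← Complex.exp_nat_mul, ← Complex.exp_nat_mul, mul_right_comm, mul_comm,
      ← Complex.exp_add, ← Complex.exp_add]
    congr 1
    have hsub : ((n - r : ℕ) : ℂ) = (n : ℂ) - r := by
      push_cast [Nat.cast_sub hrn]; ring
    rw [hsub, hn]
    push_cast
    ring
  simp_rw [hterm]
  rw [intervalIntegral.integral_finset_sum]
  · have hzero : ∀ r ∈ Finset.range (n + 1), r ≠ m + 1 →
        (∫ φ in (-(π/2))..(π/2),
          (Nat.choose n r : ℂ) *
            Complex.exp ((((2 * (r : ℝ) - 2 * m - 2 : ℝ)) : ℂ) * Complex.I * φ)) = 0 := by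
      intro r _ hrne
      set s : ℝ := 2 * (r : ℝ) - 2 * m - 2 with hs
      have hsne : s ≠ 0 := by
        intro h
        apply hrne
        have : (r : ℝ) = ((m + 1 : ℕ) : ℝ) := by push_cast; linarith
        exact_mod_cast this
      have hcne : ((s : ℂ)) * Complex.I ≠ 0 :=
        mul_ne_zero (Complex.ofReal_ne_zero.2 hsne) Complex.I_ne_zero
      rw [intervalIntegral.integral_const_mul]
      simp_rw [mul_assoc ((s : ℂ)) Complex.I]
      have : ∀ φ : ℝ, (Complex.I * (φ : ℂ)) = ((φ : ℂ) * Complex.I) := fun φ => mul_comm _ _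
      -- ∫ exp (c * x) with c = s * I : rewrite to match integral_exp_mul_complex
      have hint : (∫ φ in (-(π/2))..(π/2), Complex.exp (((s : ℂ) * Complex.I) * (φ : ℂ)))
          = (Complex.exp (((s : ℂ) * Complex.I) * ((π/2 : ℝ) : ℂ))
              - Complex.exp (((s : ℂ) * Complex.I) * ((-(π/2) : ℝ) : ℂ)))
            / ((s : ℂ) * Complex.I) := by
        exact_mod_cast integral_exp_mul_complex hcne
      have hcast : ∀ φ : ℝ, ((s:ℂ)) * (Complex.I * (φ:ℂ)) = ((s:ℂ) * Complex.I) * (φ:ℂ) := by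
        intro φ; ring
      simp_rw [hcast, hint]
      have t : ℤ := (r : ℤ) - m - 1
      have h1 : ((s : ℂ) * Complex.I) * ((π/2 : ℝ) : ℂ)
          = ((s * (π/2) : ℝ) : ℂ) * Complex.I := by push_cast; ring
      have h2 : ((s : ℂ) * Complex.I) * ((-(π/2) : ℝ) : ℂ)
          = ((-(s * (π/2)) : ℝ) : ℂ) * Complex.I := by push_cast; ring
      have hsin : Real.sin (s * (π/2)) = 0 := by
        have : s * (π/2) = (((r : ℤ) - m - 1 : ℤ) : ℝ) * π := by push_cast [hs]; ring
        rw [this]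
        exact Real.sin_int_mul_pi _
      rw [h1, h2, Complex.exp_mul_I, Complex.exp_mul_I]
      rw [← Complex.ofReal_cos, ← Complex.ofReal_sin, ← Complex.ofReal_cos, ← Complex.ofReal_sin]
      rw [Real.cos_neg, Real.sin_neg, hsin]
      simp
    rw [Finset.sum_eq_single_of_mem (m + 1) (by simp [hn]; omega) hzero]
    have hs0 : (2 * ((m + 1 : ℕ) : ℝ) - 2 * m - 2 : ℝ) = 0 := by push_cast; ring
    rw [hs0]
    simp only [Complex.ofReal_zero, zero_mul, Complex.exp_zero, mul_one]
    rw [intervalIntegral.integral_const, Complex.real_smul]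
    have hchoose : Nat.choose n (m + 1) = Nat.choose (k + m + 2) (m + 1) := by rw [hn]
    rw [hchoose]
    push_cast
    ring
  · intro r _
    apply Continuous.intervalIntegrable
    continuity

lemma continuous_gfun (k m : ℕ) : Continuous (gfun k m) := by
  unfold gfun
  apply Continuous.mul
  · apply Continuous.pow
    exact Complex.continuous_ofReal.comp (((continuous_const.mul
      ((Real.continuous_cos.comp (continuous_const.mul continuous_id)))).max continuous_const))
  · exact Complex.continuous_exp.comp ((Complex.continuous_ofReal.comp
      (continuous_const.mul continuous_id)).mul continuous_const)

lemma gfun_intInt (k m : ℕ) (a b : ℝ) : IntervalIntegrable (gfun k m) volume a b :=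
  (continuous_gfun k m).intervalIntegrable a b

lemma periodic_gfun (k m : ℕ) : Function.Periodic (gfun k m) π := by
  intro θ
  unfold gfun
  have h1 : 2 * (θ + π) = 2 * θ + 2 * π := by ring
  rw [h1, Real.cos_add_two_pi]
  congr 1
  have h2 : ((2 * ((k : ℝ) - m) * (θ + π) : ℝ) : ℂ) * Complex.I
      = ((2 * ((k : ℝ) - m) * θ : ℝ) : ℂ) * Complex.I
        + (((k : ℤ) - m : ℤ) : ℂ) * (2 * (π : ℂ) * Complex.I) := by
    push_cast; ring
  rw [h2, Complex.exp_add]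
  have h3 : Complex.exp ((((k : ℤ) - m : ℤ) : ℂ) * (2 * (π : ℂ) * Complex.I)) = 1 := by
    exact Complex.exp_int_mul_two_pi_mul_I ((k : ℤ) - m)
  rw [h3, mul_one]

lemma step6 (k m : ℕ) :
    (∫ θ in (-π)..π, gfun k m θ) = 2 * ∫ θ in (-(π/2))..(π/2), gfun k m θ := by
  have h1 := (periodic_gfun k m).intervalIntegral_add_eq (-π) (-(π/2))
  have h2 := (periodic_gfun k m).intervalIntegral_add_eq 0 (-(π/2))
  rw [show -π + π = (0:ℝ) by ring, show -(π/2) + π = π/2 by ring] at h1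
  rw [zero_add, show -(π/2) + π = π/2 by ring] at h2
  rw [← intervalIntegral.integral_add_adjacent_intervals (gfun_intInt k m (-π) 0)
    (gfun_intInt k m 0 π), h1, h2]
  ring

lemma step7 (k m : ℕ) :
    (∫ θ in (-(π/2))..(π/2), gfun k m θ) = ∫ θ in (-(π/4))..(π/4), hfun k m (2 * θ) := by
  have hzero_right : (∫ θ in (π/4)..(π/2), gfun k m θ) = 0 := by
    rw [intervalIntegral.integral_congr (g := fun _ => (0:ℂ)) ?_, intervalIntegral.integral_zero]
    intro θ hθ
    rw [Set.uIcc_of_le (by linarith [pi_pos]), Set.mem_Icc] at hθ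
    have hcos : Real.cos (2 * θ) ≤ 0 :=
      Real.cos_nonpos_of_pi_div_two_le_of_le (by linarith [hθ.1]) (by linarith [hθ.2, pi_pos])
    unfold gfun
    rw [max_eq_right (by linarith)]
    simp
  have hzero_left : (∫ θ in (-(π/2))..(-(π/4)), gfun k m θ) = 0 := by
    rw [intervalIntegral.integral_congr (g := fun _ => (0:ℂ)) ?_, intervalIntegral.integral_zero]
    intro θ hθ
    rw [Set.uIcc_of_le (by linarith [pi_pos]), Set.mem_Icc] at hθ
    have hcos : Real.cos (2 * θ) ≤ 0 := by
      rw [← Real.cos_neg]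
      exact Real.cos_nonpos_of_pi_div_two_le_of_le (by linarith [hθ.2])
        (by linarith [hθ.1, pi_pos])
    unfold gfun
    rw [max_eq_right (by linarith)]
    simp
  have heq : (∫ θ in (-(π/4))..(π/4), gfun k m θ) = ∫ θ in (-(π/4))..(π/4), hfun k m (2 * θ) := by
    apply intervalIntegral.integral_congr
    intro θ hθ
    rw [Set.uIcc_of_le (by linarith [pi_pos]), Set.mem_Icc] at hθ
    have hcos : 0 ≤ Real.cos (2 * θ) :=
      Real.cos_nonneg_of_mem_Icc ⟨by linarith [hθ.1], by linarith [hθ.2]⟩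
    unfold gfun hfun
    rw [max_eq_left (by linarith)]
    congr 3
    push_cast
    ring
  rw [← intervalIntegral.integral_add_adjacent_intervals (gfun_intInt k m (-(π/2)) (-(π/4)))
      (gfun_intInt k m (-(π/4)) (π/2)),
    ← intervalIntegral.integral_add_adjacent_intervals (gfun_intInt k m (-(π/4)) (π/4))
      (gfun_intInt k m (π/4) (π/2)),
    hzero_left, hzero_right, heq]
  ring

lemma step8 (k m : ℕ) :
    (∫ θ in (-(π/4))..(π/4), hfun k m (2 * θ)) = (2:ℂ)⁻¹ * ∫ φ in (-(π/2))..(π/2), hfun k m φ := by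
  rw [intervalIntegral.integral_comp_mul_left (hfun k m) (c := 2) two_ne_zero]
  rw [show (2:ℝ) * -(π/4) = -(π/2) by ring, show (2:ℝ) * (π/4) = π/2 by ring]
  rw [Complex.real_smul]
  push_cast
  ring

lemma step4 (k m : ℕ) (A : ℂ) :
    (∫ θ : ℝ, Set.indicator (Set.Ioo (-π) π) (fun t => A * gfun k m t) θ)
      = A * ∫ θ in (-π)..π, gfun k m θ := by
  rw [integral_indicator measurableSet_Ioo, ← integral_Ioc_eq_integral_Ioo,
    ← intervalIntegral.integral_of_le (by linarith [pi_pos] : -π ≤ π),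
    intervalIntegral.integral_const_mul]

/-- Odd-odd moments of the Bernoulli lemniscate:
`M_{2k+1,2m+1}(Ω) = (1/(2(k+m+2))) * C(k+m+2, k+1)`. -/
theorem bernoulli_odd_odd_moments (k m : ℕ) :
    complexMoment (2 * k + 1) (2 * m + 1) =
      ((1 : ℂ) / (2 * ((k : ℂ) + m + 2))) * (Nat.choose (k + m + 2) (k + 1) : ℂ) := by
  unfold complexMoment
  rw [step1, step2]
  have h3 : (fun θ : ℝ => ∫ r : ℝ, Hfun (2 * k + 1) (2 * m + 1) (r, θ))
      = fun θ : ℝ => Set.indicator (Set.Ioo (-π) π)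
          (fun t => ((2 * ((k : ℝ) + m + 2) : ℝ) : ℂ)⁻¹ * gfun k m t) θ := by
    funext θ; exact step3 k m θ
  rw [h3, step4, step6, step7, step8, step9]
  have hchoose : Nat.choose (k + m + 2) (m + 1) = Nat.choose (k + m + 2) (k + 1) := by
    rw [← Nat.choose_symm (by omega : k + 1 ≤ k + m + 2)]
    congr 1
    omega
  rw [hchoose]
  have hπ : (π : ℂ) ≠ 0 := Complex.ofReal_ne_zero.2 Real.pi_ne_zero
  have hkm : ((k : ℂ) + m + 2) ≠ 0 := by
    have : ((k + m + 2 : ℕ) : ℂ) ≠ 0 := Nat.cast_ne_zero.2 (by omega)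
    push_cast at this
    intro h; apply this; rw [← h]
  push_cast
  field_simp
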